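/- arXiv:1810.04517 — 6 statements merged into one kernel-verified Lean document; each statement's English description precedes it below -/
import Mathlib

section
/- Let A be an m×n real matrix and let x satisfy Ax = 0 with x ∈ [0,1]ⁿ. Let y ∈ ℝⁿ and v = Q_A y be the projection of y onto the row space of A. Then for every index j with v_j ≠ 0, we have x_j ≤ (1ᵀ [v / (−v_j)]⁺), where for a vector w, w⁺ denotes the componentwise maximum of w and 0. -/
/-- Coordinate upper bound for feasible solutions of `Ax = 0, x ∈ [0,1]ⁿ`
derived from the row-space projection `v = Q_A y`. -/
theorem stmt_1 (m n : ℕ) (A : Matrix (Fin m) (Fin n) ℝ)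
    (x : EuclideanSpace ℝ (Fin n))
    (hAx : Matrix.toEuclideanLin A x = 0)
    (hx : ∀ i, 0 ≤ x i ∧ x i ≤ 1)
    (R : Submodule ℝ (EuclideanSpace ℝ (Fin n)))
    (hR : R = (LinearMap.ker (Matrix.toEuclideanLin A))ᗮ)
    (y v : EuclideanSpace ℝ (Fin n))
    (hv : v = (R.orthogonalProjectionOnto y : EuclideanSpace ℝ (Fin n))) :
    ∀ j, v j ≠ 0 → x j ≤ ∑ i, max (v i / (-(v j))) 0 := by
  have hker : x ∈ LinearMap.ker (Matrix.toEuclideanLin A) := hAx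
  have hvR : v ∈ R := by rw [hv]; exact (R.orthogonalProjectionOnto y).2
  rw [hR] at hvR
  have hinner : (inner ℝ x v : ℝ) = 0 :=
    (Submodule.mem_orthogonal _ v).1 hvR x hker
  have hsum : ∑ i, x i * v i = 0 := by
    have := hinner
    rw [PiLp.inner_apply] at this
    simpa [mul_comm] using this
  intro j hvj
  have hsplit : (∑ i ∈ Finset.univ.erase j, x i * v i) + x j * v j = 0 := by
    rw [Finset.sum_erase_add Finset.univ _ (Finset.mem_univ j)]
    exact hsum
  have hxj : x j = ∑ i ∈ Finset.univ.erase j, x i * (v i / (-(v j))) := by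
    have h1 : ∑ i ∈ Finset.univ.erase j, x i * (v i / (-(v j)))
        = (∑ i ∈ Finset.univ.erase j, x i * v i) / (-(v j)) := by
      rw [Finset.sum_div]
      exact Finset.sum_congr rfl fun i _ => by ring
    rw [h1, eq_div_iff (neg_ne_zero.mpr hvj)]
    linarith [hsplit]
  have hbound : x j ≤ ∑ i ∈ Finset.univ.erase j, max (v i / (-(v j))) 0 := by
    rw [hxj]
    refine Finset.sum_le_sum fun i _ => ?_
    rcases le_total 0 (v i / (-(v j))) with h | h
    · calc x i * (v i / (-(v j))) ≤ 1 * (v i / (-(v j))) :=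
            mul_le_mul_of_nonneg_right (hx i).2 h
        _ = v i / (-(v j)) := one_mul _
        _ ≤ max (v i / (-(v j))) 0 := le_max_left _ _
    · calc x i * (v i / (-(v j))) ≤ 0 := mul_nonpos_of_nonneg_of_nonpos (hx i).1 h
        _ ≤ max (v i / (-(v j))) 0 := le_max_right _ _
  refine hbound.trans ?_
  refine Finset.sum_le_sum_of_subset_of_nonneg (Finset.subset_univ _) ?_
  intro i _ _
  exact le_max_right _ _
end

section
/- Let P be an orthogonal projection matrix on ℝⁿ, let x ∈ (0,1]ⁿ satisfy Px = 0 (i.e., x lies in the range of I − P), and let z = P y for some y ∈ ℝⁿ. Then for every index j with z_j ≠ 0, x_j ≤ 1ᵀ [z / (−z_j)]⁺. -/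
open Matrix

/-- Dual cut bound: if `P` is an orthogonal projection matrix, `x ∈ (0,1]ⁿ`
with `Px = 0`, and `z = Py`, then every nonzero coordinate `z_j` yields the
bound `x_j ≤ 1ᵀ[z/(-z_j)]⁺`. -/
theorem stmt_2 (n : ℕ) (P : Matrix (Fin n) (Fin n) ℝ)
    (hPsymm : Pᵀ = P) (hPidem : P * P = P)
    (x : Fin n → ℝ)
    (hPx : P.mulVec x = 0)
    (hx : ∀ i, 0 < x i ∧ x i ≤ 1)
    (y z : Fin n → ℝ)
    (hz : z = P.mulVec y) :
    ∀ j, z j ≠ 0 → x j ≤ ∑ i, max (z i / (-(z j))) 0 := by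
  intro j hj
  have hvm : P.vecMul x = 0 := by
    rw [← hPsymm, Matrix.vecMul_transpose, hPx]
  have hdot : ∑ i, x i * z i = 0 := by
    have : x ⬝ᵥ z = 0 := by
      rw [hz, Matrix.dotProduct_mulVec, hvm, zero_dotProduct]
    simpa [dotProduct] using this
  have hsplit := Finset.add_sum_erase Finset.univ (fun i => x i * z i)
    (Finset.mem_univ j)
  have hsum : ∑ i ∈ Finset.univ.erase j, x i * z i = - (x j * z j) := by
    linarith [hdot, hsplit]
  have hxj : x j = ∑ i ∈ Finset.univ.erase j, x i * (z i / (-(z j))) := by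
    have h1 : ∑ i ∈ Finset.univ.erase j, x i * (z i / (-(z j)))
        = (∑ i ∈ Finset.univ.erase j, x i * z i) / (-(z j)) := by
      rw [Finset.sum_div]
      exact Finset.sum_congr rfl fun i _ => by ring
    rw [h1, hsum]
    field_simp
  have hterm : ∀ i ∈ Finset.univ.erase j,
      x i * (z i / (-(z j))) ≤ max (z i / (-(z j))) 0 := by
    intro i _
    set t := z i / (-(z j))
    rcases le_or_gt 0 t with ht | ht
    · exact le_trans (mul_le_of_le_one_left ht (hx i).2) (le_max_left _ _)
    · exact le_trans (mul_nonpos_of_nonneg_of_nonpos (hx i).1.le ht.le)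
        (le_max_right _ _)
  calc x j = ∑ i ∈ Finset.univ.erase j, x i * (z i / (-(z j))) := hxj
    _ ≤ ∑ i ∈ Finset.univ.erase j, max (z i / (-(z j))) 0 :=
        Finset.sum_le_sum hterm
    _ ≤ ∑ i, max (z i / (-(z j))) 0 :=
        Finset.sum_le_sum_of_subset_of_nonneg (Finset.erase_subset _ _)
          (fun i _ _ => le_max_right _ _)
end

section
/- Let z, x ∈ ℝⁿ with ⟨x, z⟩ = 0 and 0 ≤ x_i ≤ 1 for all i. If z_j < 0 then x_j ≤ (1ᵀ z⁺)/(−z_j), and if z_j > 0 then x_j ≤ (−1ᵀ z⁻)/z_j, where z⁻ := min(z, 0) componentwise. -/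
/-- Core orthogonality-based coordinate bound: if `⟨x, z⟩ = 0` and
`0 ≤ x ≤ 1` componentwise, then `z_j < 0` implies `x_j ≤ (1ᵀ z⁺)/(-z_j)` and
`z_j > 0` implies `x_j ≤ (-1ᵀ z⁻)/z_j`. -/
theorem stmt_3 (n : ℕ) (z x : Fin n → ℝ)
    (horth : ∑ i, x i * z i = 0)
    (hx : ∀ i, 0 ≤ x i ∧ x i ≤ 1) (j : Fin n) :
    (z j < 0 → x j ≤ (∑ i, max (z i) 0) / (-(z j))) ∧
    (0 < z j → x j ≤ (-(∑ i, min (z i) 0)) / z j) := by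
  have hsplit : ∑ i, x i * max (z i) 0 + ∑ i, x i * min (z i) 0 = 0 := by
    rw [← Finset.sum_add_distrib]
    simpa [← mul_add, max_add_min] using horth
  have hposle : ∑ i, x i * max (z i) 0 ≤ ∑ i, max (z i) 0 :=
    Finset.sum_le_sum fun i _ => by
      have := (hx i).2
      nlinarith [le_max_right (z i) 0]
  constructor
  · intro hz
    rw [le_div_iff₀ (by linarith)]
    have hterm : x j * (-(z j)) = -(x j * min (z j) 0) := by
      rw [min_eq_left hz.le]; ring
    have hsum : -(x j * min (z j) 0) ≤ -(∑ i, x i * min (z i) 0) := by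
      have h := Finset.single_le_sum (f := fun i => -(x i * min (z i) 0))
        (fun i _ => neg_nonneg.mpr
          (mul_nonpos_of_nonneg_of_nonpos (hx i).1 (min_le_right (z i) 0)))
        (Finset.mem_univ j)
      simpa [Finset.sum_neg_distrib] using h
    calc x j * (-(z j)) = -(x j * min (z j) 0) := hterm
      _ ≤ -(∑ i, x i * min (z i) 0) := hsum
      _ = ∑ i, x i * max (z i) 0 := by linarith
      _ ≤ ∑ i, max (z i) 0 := hposle
  · intro hz
    rw [le_div_iff₀ hz]
    have hterm : x j * z j = x j * max (z j) 0 := by rw [max_eq_left hz.le]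
    have hsum : x j * max (z j) 0 ≤ ∑ i, x i * max (z i) 0 :=
      Finset.single_le_sum (f := fun i => x i * max (z i) 0)
        (fun i _ => mul_nonneg (hx i).1 (le_max_right _ _)) (Finset.mem_univ j)
    calc x j * z j = x j * max (z j) 0 := hterm
      _ ≤ ∑ i, x i * max (z i) 0 := hsum
      _ = -(∑ i, x i * min (z i) 0) := by linarith
      _ ≤ -(∑ i, min (z i) 0) := by
        have : ∑ i, min (z i) 0 ≤ ∑ i, x i * min (z i) 0 :=
          Finset.sum_le_sum fun i _ => by
            have h1 := (hx i).1; have h2 := (hx i).2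
            nlinarith [min_le_right (z i) 0]
        linarith
end

section
/- Let A be an m×n real matrix. Exactly one of the following holds: (1) there exists x ∈ ℝⁿ with Ax = 0, x ≥ 0, x ≠ 0; or (2) there exists u ∈ ℝᵐ with Aᵀu > 0 (all coordinates strictly positive). -/
open Matrix

/-- Gordan's theorem: exactly one of the systems `Ax = 0, x ≥ 0, x ≠ 0` and
`Aᵀu > 0` is feasible. -/
theorem stmt_8 (m n : ℕ) (A : Matrix (Fin m) (Fin n) ℝ) :
    Xor' (∃ x : Fin n → ℝ, A.mulVec x = 0 ∧ (∀ i, 0 ≤ x i) ∧ x ≠ 0)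
         (∃ u : Fin m → ℝ, ∀ j, 0 < Aᵀ.mulVec u j) := by
  have notboth : ¬ ((∃ x : Fin n → ℝ, A.mulVec x = 0 ∧ (∀ i, 0 ≤ x i) ∧ x ≠ 0) ∧
      (∃ u : Fin m → ℝ, ∀ j, 0 < Aᵀ.mulVec u j)) := by
    rintro ⟨⟨x, hAx, hx0, hxne⟩, ⟨u, hu⟩⟩
    have key : u ⬝ᵥ A.mulVec x = (Aᵀ.mulVec u) ⬝ᵥ x := by
      rw [Matrix.dotProduct_mulVec, Matrix.mulVec_transpose]
    rw [hAx, dotProduct_zero] at key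
    obtain ⟨j, hj⟩ := Function.ne_iff.mp hxne
    have hjpos : 0 < x j := lt_of_le_of_ne (hx0 j) (Ne.symm hj)
    have hpos : 0 < (Aᵀ.mulVec u) ⬝ᵥ x := by
      apply Finset.sum_pos' (fun k _ => mul_nonneg (hu k).le (hx0 k))
      exact ⟨j, Finset.mem_univ j, mul_pos (hu j) hjpos⟩
    rw [← key] at hpos; exact lt_irrefl 0 hpos
  by_cases hP : ∃ x : Fin n → ℝ, A.mulVec x = 0 ∧ (∀ i, 0 ≤ x i) ∧ x ≠ 0
  · exact Or.inl ⟨hP, fun hQ => notboth ⟨hP, hQ⟩⟩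
  · refine Or.inr ⟨?_, hP⟩
    -- build the image of the standard simplex
    set T : (Fin n → ℝ) →ₗ[ℝ] (Fin m → ℝ) := A.mulVecLin with hT
    have hcont : Continuous T := T.continuous_of_finiteDimensional
    set S : Set (Fin m → ℝ) := T '' stdSimplex ℝ (Fin n) with hS
    have hSconv : Convex ℝ S := (convex_stdSimplex ℝ (Fin n)).linear_image T
    have hScomp : IsCompact S := (isCompact_stdSimplex ℝ (Fin n)).image hcont
    have hSclosed : IsClosed S := hScomp.isClosed
    have h0 : (0 : Fin m → ℝ) ∉ S := by
      rintro ⟨x, ⟨hx0, hx1⟩, hx⟩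
      refine hP ⟨x, hx, hx0, ?_⟩
      intro h
      rw [h] at hx1
      simp at hx1
    obtain ⟨f, t, hf0, hfS⟩ := geometric_hahn_banach_point_closed hSconv hSclosed h0
    refine ⟨fun i => f (Pi.single i 1), fun j => ?_⟩
    have hmem : A.mulVec (Pi.single j 1) ∈ S := by
      refine ⟨Pi.single j 1, ⟨?_, ?_⟩, rfl⟩
      · intro i
        by_cases h : i = j <;> simp [h, Pi.single_apply]
      · simp [Pi.single_apply]
    have hpos : 0 < f (A.mulVec (Pi.single j 1)) := by
      have := hfS _ hmem
      have h0' : f 0 = 0 := map_zero f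
      linarith [hf0, h0' ▸ hf0]
    have hv : A.mulVec (Pi.single j 1) = fun i => A i j := by
      ext i
      simp [Matrix.mulVec, dotProduct, Pi.single_apply]
    have heq : Aᵀ.mulVec (fun i => f (Pi.single i 1)) j
        = f (A.mulVec (Pi.single j 1)) := by
      rw [hv, pi_eq_sum_univ (fun i => A i j), map_sum]
      simp only [_root_.map_smul, smul_eq_mul]
      have hsingle : ∀ i : Fin m, (fun k => if i = k then (1:ℝ) else 0) = Pi.single i 1 := by
        intro i; ext k; simp [Pi.single_apply, eq_comm]
      simp only [hsingle]
      simp [Matrix.mulVec, dotProduct, Matrix.transpose_apply, mul_comm]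
    rw [heq]
    exact hpos
end

section
/- Let A be an m×n real matrix. The system Aᵀu > 0 (u ∈ ℝᵐ) is feasible if and only if there exists x ∈ (0,1]ⁿ with P_A x = 0, where P_A is the orthogonal projection onto the null space of A. -/
open Matrix

lemma ker_eq_orth_range_adjoint {E F : Type*} [NormedAddCommGroup E] [InnerProductSpace ℝ E]
    [NormedAddCommGroup F] [InnerProductSpace ℝ F] [FiniteDimensional ℝ E]
    [FiniteDimensional ℝ F] (T : E →ₗ[ℝ] F) :
    LinearMap.ker T = (LinearMap.range (LinearMap.adjoint T))ᗮ := by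
  ext v
  simp only [LinearMap.mem_ker, Submodule.mem_orthogonal]
  constructor
  · rintro hv w ⟨u, rfl⟩
    rw [LinearMap.adjoint_inner_left, hv, inner_zero_right]
  · intro hv
    have h := hv (LinearMap.adjoint T (T v)) ⟨T v, rfl⟩
    rw [LinearMap.adjoint_inner_left] at h
    exact inner_self_eq_zero.mp h

/-- Dual feasibility via the null-space projection: `Aᵀu > 0` is feasible iff
there exists `x ∈ (0,1]ⁿ` with `P_A x = 0`, where `P_A` is the orthogonal
projection onto the null space of `A`. -/
theorem stmt_10 (m n : ℕ) (A : Matrix (Fin m) (Fin n) ℝ)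
    (N : Submodule ℝ (EuclideanSpace ℝ (Fin n)))
    (hN : N = LinearMap.ker (Matrix.toEuclideanLin A)) :
    (∃ u : Fin m → ℝ, ∀ j, 0 < Aᵀ.mulVec u j) ↔
    (∃ x : EuclideanSpace ℝ (Fin n), (∀ i, 0 < x i ∧ x i ≤ 1) ∧
      N.orthogonalProjectionOnto x = 0) := by
  have hNorth : Nᗮ = LinearMap.range (Matrix.toEuclideanLin Aᵀ) := by
    have h1 : Matrix.toEuclideanLin Aᵀ = LinearMap.adjoint (Matrix.toEuclideanLin A) := by
      rw [← Matrix.toEuclideanLin_conjTranspose_eq_adjoint,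
        Matrix.conjTranspose_eq_transpose_of_trivial]
    rw [hN, ker_eq_orth_range_adjoint, Submodule.orthogonal_orthogonal, h1]
  have hmem : ∀ x : EuclideanSpace ℝ (Fin n),
      (N.orthogonalProjectionOnto x = 0 ↔ ∃ u : Fin m → ℝ, ∀ i, Aᵀ.mulVec u i = x i) := by
    intro x
    rw [Submodule.orthogonalProjectionOnto_eq_zero_iff, hNorth]
    constructor
    · rintro ⟨u, rfl⟩
      exact ⟨(WithLp.equiv 2 _) u, fun i => rfl⟩
    · rintro ⟨u, hu⟩
      refine ⟨(WithLp.equiv 2 _).symm u, ?_⟩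
      ext i
      exact hu i
  constructor
  · rintro ⟨u, hu⟩
    set y : Fin n → ℝ := Aᵀ.mulVec u with hy
    set M : ℝ := 1 + ∑ j, y j with hM
    have hMpos : 0 < M := by
      have : 0 ≤ ∑ j, y j := Finset.sum_nonneg fun j _ => (hu j).le
      linarith
    refine ⟨(WithLp.equiv 2 _).symm (M⁻¹ • y), fun i => ⟨?_, ?_⟩, ?_⟩
    · exact mul_pos (inv_pos.mpr hMpos) (hu i)
    · show M⁻¹ * y i ≤ 1
      rw [inv_mul_le_one₀ hMpos]
      have : y i ≤ ∑ j, y j := Finset.single_le_sum (fun j _ => (hu j).le) (Finset.mem_univ i)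
      linarith
    · rw [hmem]
      exact ⟨M⁻¹ • u, fun i => by simp [Matrix.mulVec_smul, hy]⟩
  · rintro ⟨x, hx, hproj⟩
    obtain ⟨u, hu⟩ := (hmem x).mp hproj
    exact ⟨u, fun j => (hu j) ▸ (hx j).1⟩
end

section
/- Let Q be an n×n orthogonal projection matrix, y ∈ ℝⁿ with y_i ≥ 1/n for all i, v = Qy, z = y − v, and suppose z is not strictly positive. Let K = {k : v_k ≤ 0}, q_K = Q(Σ_{k∈K} e_k), and suppose ⟨q_K/‖q_K‖, v⟩ > −1/(2n^{3/2}) (with q_K ≠ 0). Then there exists an index j with v_j ≥ 1/n such that (−Σ_i min(v_i,0))/v_j ≤ 1/2. -/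
open Matrix

/-- The full cut lemma: if the basic procedure stalls
(`⟨q_K/‖q_K‖, v⟩ > -1/(2n^{3/2})` with `K = {k : v_k ≤ 0}`), then there is an
index `j` with `v_j ≥ 1/n` and `bound_j(y) = (-Σ_i min(v_i,0))/v_j ≤ 1/2`. -/
theorem stmt_14 (n : ℕ) (hn : 1 ≤ n) (Q : Matrix (Fin n) (Fin n) ℝ)
    (hQsymm : Qᵀ = Q) (hQidem : Q * Q = Q)
    (y v z : Fin n → ℝ)
    (hy : ∀ i, 1 / (n : ℝ) ≤ y i)
    (hv : v = Q.mulVec y) (hz : z = y - v)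
    (hznotpos : ¬ (∀ i, 0 < z i))
    (K : Finset (Fin n)) (hK : K = Finset.univ.filter (fun k => v k ≤ 0))
    (qK : Fin n → ℝ)
    (hqK : qK = Q.mulVec (fun i => if i ∈ K then 1 else 0))
    (hqK0 : qK ≠ 0)
    (hstall : -(1 / (2 * (n : ℝ) * Real.sqrt n)) <
      (qK ⬝ᵥ v) / Real.sqrt (∑ i, qK i ^ 2)) :
    ∃ j, 1 / (n : ℝ) ≤ v j ∧ (-(∑ i, min (v i) 0)) / v j ≤ 1 / 2 := by
  set u : Fin n → ℝ := fun i => if i ∈ K then 1 else 0 with hu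
  have hnR : (0 : ℝ) < n := by exact_mod_cast Nat.lt_of_lt_of_le Nat.zero_lt_one hn
  have hsn : (0 : ℝ) < Real.sqrt n := Real.sqrt_pos.mpr hnR
  -- Q fixes qK and v
  have hfixq : Q.mulVec qK = qK := by rw [hqK, Matrix.mulVec_mulVec, hQidem]
  have hfixv : Q.mulVec v = v := by rw [hv, Matrix.mulVec_mulVec, hQidem]
  -- key self-adjointness fact
  have key : ∀ w : Fin n → ℝ, qK ⬝ᵥ Q.mulVec w = qK ⬝ᵥ w := by
    intro w
    rw [Matrix.dotProduct_mulVec, ← Matrix.mulVec_transpose, hQsymm, hfixq]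
  -- ⟨qK, v⟩ = ⟨u, v⟩  (since Q fixes v and Q is self-adjoint)
  have hqKv : qK ⬝ᵥ v = u ⬝ᵥ v := by
    rw [hqK, dotProduct_comm, Matrix.dotProduct_mulVec, ← Matrix.mulVec_transpose,
      hQsymm, hfixv, dotProduct_comm]
  -- ⟨u, v⟩ = Σ min(v i, 0)
  have huv : u ⬝ᵥ v = ∑ i, min (v i) 0 := by
    unfold dotProduct
    refine Finset.sum_congr rfl fun i _ => ?_
    by_cases h : i ∈ K
    · have hvi : v i ≤ 0 := by rw [hK] at h; exact (Finset.mem_filter.mp h).2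
      simp [hu, h, min_eq_left hvi]
    · have hvi : ¬ v i ≤ 0 := by
        rw [hK] at h; exact fun hh => h (Finset.mem_filter.mpr ⟨Finset.mem_univ i, hh⟩)
      simp [hu, h, min_eq_right (le_of_lt (lt_of_not_ge hvi))]
  -- S := ‖qK‖²
  set S : ℝ := ∑ i, qK i ^ 2 with hS
  have hSdp : S = qK ⬝ᵥ qK := by simp [hS, dotProduct, sq]
  have hSpos : 0 < S := by
    rcases Function.ne_iff.mp hqK0 with ⟨i, hi⟩
    exact Finset.sum_pos' (fun j _ => sq_nonneg _)
      ⟨i, Finset.mem_univ i, lt_of_le_of_ne (sq_nonneg _) (Ne.symm (pow_ne_zero 2 hi))⟩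
  -- S = ⟨u, qK⟩, hence S ≤ n by Cauchy–Schwarz
  have hSu : S = ∑ i, u i * qK i := by
    have := key u
    rw [← hqK] at this
    rw [hSdp, this]
    simp [dotProduct, mul_comm]
  have hSle : S ≤ n := by
    have hcs : (∑ i, u i * qK i) ^ 2 ≤ (∑ i, u i ^ 2) * ∑ i, qK i ^ 2 :=
      Finset.sum_mul_sq_le_sq_mul_sq _ _ _
    have hu2 : (∑ i, u i ^ 2) ≤ (n : ℝ) := by
      calc (∑ i, u i ^ 2) ≤ ∑ _i : Fin n, (1 : ℝ) := by
            refine Finset.sum_le_sum fun i _ => ?_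
            by_cases h : i ∈ K <;> simp [hu, h]
        _ = n := by simp
    have : S * S ≤ (n : ℝ) * S := by
      have h1 : S ^ 2 ≤ (n : ℝ) * S := by
        rw [hSu] at hSpos ⊢
        calc (∑ i, u i * qK i) ^ 2 ≤ (∑ i, u i ^ 2) * ∑ i, qK i ^ 2 := hcs
          _ ≤ (n : ℝ) * ∑ i, qK i ^ 2 :=
            mul_le_mul_of_nonneg_right hu2 (Finset.sum_nonneg fun i _ => by positivity)
          _ = (n : ℝ) * ∑ i, u i * qK i := by rw [← hS, hSu]
      simpa [sq] using h1
    exact le_of_mul_le_mul_right this hSpos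
  have hsqrtS : Real.sqrt S ≤ Real.sqrt n := Real.sqrt_le_sqrt hSle
  -- from the stall condition: ⟨qK, v⟩ > -1/(2n)
  have hsum_gt : -(1 / (2 * (n : ℝ))) < ∑ i, min (v i) 0 := by
    have hsp : 0 < Real.sqrt S := Real.sqrt_pos.mpr hSpos
    have h1 : -(1 / (2 * (n : ℝ) * Real.sqrt n)) * Real.sqrt S < qK ⬝ᵥ v :=
      (lt_div_iff₀ hsp).mp hstall
    have h2 : -(1 / (2 * (n : ℝ))) ≤ -(1 / (2 * (n : ℝ) * Real.sqrt n)) * Real.sqrt S := by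
      have h3 : -(1 / (2 * (n : ℝ) * Real.sqrt n)) * Real.sqrt n
          ≤ -(1 / (2 * (n : ℝ) * Real.sqrt n)) * Real.sqrt S := by
        apply mul_le_mul_of_nonpos_left hsqrtS
        have : 0 < 1 / (2 * (n : ℝ) * Real.sqrt n) := by positivity
        linarith
      have h4 : -(1 / (2 * (n : ℝ) * Real.sqrt n)) * Real.sqrt n = -(1 / (2 * (n : ℝ))) := by
        field_simp
      linarith
    rw [hqKv, huv] at h1
    linarith
  -- pick j with z j ≤ 0, hence v j ≥ y j ≥ 1/n
  push_neg at hznotpos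
  obtain ⟨j, hj⟩ := hznotpos
  have hzj : y j - v j ≤ 0 := by rw [hz] at hj; simpa using hj
  have hvj : 1 / (n : ℝ) ≤ v j := le_trans (hy j) (by linarith)
  refine ⟨j, hvj, ?_⟩
  have hnonneg : 0 ≤ -(∑ i, min (v i) 0) := by
    have : (∑ i, min (v i) 0) ≤ 0 :=
      Finset.sum_nonpos fun i _ => min_le_right _ _
    linarith
  have hlt : -(∑ i, min (v i) 0) ≤ 1 / (2 * (n : ℝ)) := by linarith
  have hd : (0 : ℝ) < 1 / (n : ℝ) := by positivity
  calc (-(∑ i, min (v i) 0)) / v j ≤ (1 / (2 * (n : ℝ))) / (1 / (n : ℝ)) :=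
        div_le_div₀ (by positivity) hlt hd hvj
    _ = 1 / 2 := by
        field_simp
end
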